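/- arXiv:2304.07790 — 2 statements merged into one kernel-verified Lean document; each statement's English description precedes it below -/
import Mathlib

section
/- Under the model y = Σ_l Σ_{s∈l} G^s β^s 𝟙^s + β^0 𝟏 + ε, with mutations at distinct sites independent, ε independent of all mutations with Var(ε) = σ_e² I, and each site's covariance given by Cov(G_i^s 𝟙^s, G_j^s 𝟙^s) = (u^l/n^l)(h_t^l − h_{t,ij}^l), the covariance matrix of y equals Σ_l (σ_t^l)² A_t^l + σ_e² I, where (σ_t^l)² = (u^l/n^l) Σ_{s∈l, s∉S(t)} (β^s)² and [A_t^l]_{ij} = h_t^l − h_{t,ij}^l. -/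
open MeasureTheory ProbabilityTheory

/-- The `n×n` covariance matrix of an `ℝⁿ`-valued random vector `Z`. -/
noncomputable def covMatrix {Ω : Type*} [MeasurableSpace Ω] (μ : Measure Ω) {n : ℕ}
    (Z : Ω → Fin n → ℝ) : Matrix (Fin n) (Fin n) ℝ :=
  Matrix.of fun i j =>
    (∫ ω, Z ω i * Z ω j ∂μ) - (∫ ω, Z ω i ∂μ) * (∫ ω, Z ω j ∂μ)

/-- Theorem 1 of the paper.  Under the model `y = Σ_l Σ_{s∈l} G^s β^s 𝟙^s + β⁰𝟏 + ε`
(`Z s = G^s 𝟙^s`), with mutations at distinct sites independent and independent of `ε`,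
`Var(ε) = σ_e² I`, sites `s ∈ S(t)` deterministic (zero covariance), and for `s ∉ S(t)`
`Cov(Z_i^s, Z_j^s) = (u^l/n^l)(h_t^l − h_{t,ij}^l)` for `l` the locus of `s`, the covariance
matrix of `y` is `Σ_l (σ_t^l)² A_t^l + σ_e² I` with
`(σ_t^l)² = (u^l/n^l) Σ_{s∈l, s∉S(t)} (β^s)²` and `[A_t^l]_{ij} = h_t^l − h_{t,ij}^l`. -/
theorem trait_variance_decomposition {Ω : Type*} [MeasurableSpace Ω] (μ : Measure Ω)
    [IsProbabilityMeasure μ] {n nl : ℕ} {S : Type*} [Fintype S] [DecidableEq S]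
    (loc : S → Fin nl) (St : Finset S)
    (Z : S → Ω → Fin n → ℝ) (ε : Ω → Fin n → ℝ) (β : S → ℝ) (β0 : ℝ)
    (u nsite h : Fin nl → ℝ) (hij : Fin nl → Fin n → Fin n → ℝ) (σe2 : ℝ)
    (hindep : iIndepFun
      (fun o : Option S => Option.elim o ε Z) μ)
    (hZL2 : ∀ s i, MemLp (fun ω => Z s ω i) 2 μ)
    (hεL2 : ∀ i, MemLp (fun ω => ε ω i) 2 μ)
    (hZmeas : ∀ s, Measurable (Z s)) (hεmeas : Measurable ε)
    (hεcov : covMatrix μ ε = σe2 • (1 : Matrix (Fin n) (Fin n) ℝ))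
    (hdet : ∀ s ∈ St, covMatrix μ (Z s) = 0)
    (hcov : ∀ s ∉ St, ∀ i j,
      covMatrix μ (Z s) i j = u (loc s) / nsite (loc s) * (h (loc s) - hij (loc s) i j)) :
    covMatrix μ (fun ω i => (∑ s, Z s ω i * β s) + β0 + ε ω i)
      = (∑ l, ((u l / nsite l) *
            ∑ s ∈ Finset.univ.filter (fun s => loc s = l ∧ s ∉ St), (β s) ^ 2) •
          Matrix.of (fun i j => h l - hij l i j))
        + σe2 • (1 : Matrix (Fin n) (Fin n) ℝ) := by
  classical
  set X : Option S → Ω → Fin n → ℝ := fun o => Option.elim o ε Z with hXdef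
  set c : Option S → ℝ := fun o => Option.elim o 1 β with hcdef
  have hXL2 : ∀ o i, MemLp (fun ω => X o ω i) 2 μ := by
    rintro (_ | s) i
    · exact hεL2 i
    · exact hZL2 s i
  have hXint : ∀ o i, Integrable (fun ω => X o ω i) μ := fun o i =>
    (hXL2 o i).integrable one_le_two
  have hXmul : ∀ o o' (i j : Fin n), Integrable (fun ω => X o ω i * X o' ω j) μ := by
    intro o o' i j
    have h12 : (1 : ENNReal) / 1 = 1 / 2 + 1 / 2 := by
      rw [ENNReal.div_add_div_same, div_one, (by norm_num : (1 : ENNReal) + 1 = 2),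
        ENNReal.div_self (by norm_num) (by norm_num)]
    have := ((hXL2 o' j).smul (hXL2 o i) (r := 1)).integrable le_rfl
    simpa [smul_eq_mul, Pi.mul_def] using this
  have hcross : ∀ o o', o ≠ o' → ∀ i j : Fin n,
      (∫ ω, X o ω i * X o' ω j ∂μ)
        = (∫ ω, X o ω i ∂μ) * (∫ ω, X o' ω j ∂μ) := by
    intro o o' hne i j
    have h1 : IndepFun (X o) (X o') μ := hindep.indepFun hne
    have h2 : IndepFun (fun ω => X o ω i) (fun ω => X o' ω j) μ :=
      h1.comp (measurable_pi_apply i) (measurable_pi_apply j)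
    exact h2.integral_fun_mul_eq_mul_integral (hXint o i).1 (hXint o' j).1
  -- entrywise
  ext i j
  -- rewrite the random vector using the option-indexed sum
  have hy : ∀ ω (k : Fin n),
      (∑ s, Z s ω k * β s) + β0 + ε ω k = (∑ o, c o * X o ω k) + β0 := by
    intro ω k
    rw [Fintype.sum_option]
    simp only [hXdef, hcdef, Option.elim]
    rw [Finset.sum_congr rfl (fun s _ => mul_comm (β s) (Z s ω k))]
    ring
  -- the constant shift doesn't change covariance
  have hFint : ∀ k : Fin n, Integrable (fun ω => ∑ o, c o * X o ω k) μ := by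
    intro k
    exact integrable_finset_sum _ fun o _ => ((hXint o k).const_mul (c o))
  have hFmul : ∀ k m : Fin n,
      Integrable (fun ω => (∑ o, c o * X o ω k) * (∑ o, c o * X o ω m)) μ := by
    intro k m
    have : (fun ω => (∑ o, c o * X o ω k) * (∑ o, c o * X o ω m))
        = fun ω => ∑ o, ∑ o', (c o * c o') * (X o ω k * X o' ω m) := by
      funext ω
      rw [Finset.sum_mul_sum]
      apply Finset.sum_congr rfl; intro o _
      apply Finset.sum_congr rfl; intro o' _
      ring
    rw [this]
    exact integrable_finset_sum _ fun o _ =>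
      integrable_finset_sum _ fun o' _ => ((hXmul o o' k m).const_mul _)
  have key : covMatrix μ (fun ω k => (∑ s, Z s ω k * β s) + β0 + ε ω k) i j
      = ∑ o, c o * c o * covMatrix μ (X o) i j := by
    have hrw : covMatrix μ (fun ω k => (∑ s, Z s ω k * β s) + β0 + ε ω k) i j
        = (∫ ω, ((∑ o, c o * X o ω i) + β0) * ((∑ o, c o * X o ω j) + β0) ∂μ)
          - (∫ ω, (∑ o, c o * X o ω i) + β0 ∂μ)
            * (∫ ω, (∑ o, c o * X o ω j) + β0 ∂μ) := by
      simp only [covMatrix, Matrix.of_apply, hy]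
    rw [hrw]
    have e1 : (∫ ω, ((∑ o, c o * X o ω i) + β0) * ((∑ o, c o * X o ω j) + β0) ∂μ)
        = (∫ ω, (∑ o, c o * X o ω i) * (∑ o, c o * X o ω j) ∂μ)
          + β0 * (∫ ω, (∑ o, c o * X o ω i) ∂μ)
          + β0 * (∫ ω, (∑ o, c o * X o ω j) ∂μ) + β0 * β0 := by
      have : (fun ω => ((∑ o, c o * X o ω i) + β0) * ((∑ o, c o * X o ω j) + β0))
          = fun ω => (∑ o, c o * X o ω i) * (∑ o, c o * X o ω j)
            + (β0 * (∑ o, c o * X o ω i) + (β0 * (∑ o, c o * X o ω j) + β0 * β0)) := by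
        funext ω; ring
      rw [this, integral_add (hFmul i j), integral_add ((hFint i).const_mul β0),
        integral_add ((hFint j).const_mul β0) (integrable_const _),
        integral_const_mul, integral_const_mul, integral_const]
      · simp [measure_univ]; ring
      · exact ((hFint j).const_mul β0).add (integrable_const _)
      · exact ((hFint i).const_mul β0).add
          (((hFint j).const_mul β0).add (integrable_const _))
    have e2 : ∀ k : Fin n, (∫ ω, (∑ o, c o * X o ω k) + β0 ∂μ)
        = (∫ ω, (∑ o, c o * X o ω k) ∂μ) + β0 := by
      intro k
      rw [integral_add (hFint k) (integrable_const _), integral_const]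
      simp [measure_univ]
    rw [e1, e2, e2]
    have e3 : (∫ ω, (∑ o, c o * X o ω i) * (∑ o, c o * X o ω j) ∂μ)
        = ∑ o, ∑ o', (c o * c o') * (∫ ω, X o ω i * X o' ω j ∂μ) := by
      have : (fun ω => (∑ o, c o * X o ω i) * (∑ o, c o * X o ω j))
          = fun ω => ∑ o, ∑ o', (c o * c o') * (X o ω i * X o' ω j) := by
        funext ω
        rw [Finset.sum_mul_sum]
        exact Finset.sum_congr rfl fun o _ =>
          Finset.sum_congr rfl fun o' _ => by ring
      rw [this, integral_finset_sum _ fun o _ =>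
        integrable_finset_sum _ fun o' _ => ((hXmul o o' i j).const_mul _)]
      exact Finset.sum_congr rfl fun o _ => by
        rw [integral_finset_sum _ fun o' _ => ((hXmul o o' i j).const_mul _)]
        exact Finset.sum_congr rfl fun o' _ => integral_const_mul _ _
    have e4 : ∀ k : Fin n, (∫ ω, (∑ o, c o * X o ω k) ∂μ)
        = ∑ o, c o * (∫ ω, X o ω k ∂μ) := by
      intro k
      rw [integral_finset_sum _ fun o _ => (hXint o k).const_mul _]
      exact Finset.sum_congr rfl fun o _ => integral_const_mul _ _
    rw [e3, e4, e4]
    have e5 : (∑ o, c o * (∫ ω, X o ω i ∂μ)) * (∑ o, c o * (∫ ω, X o ω j ∂μ))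
        = ∑ o, ∑ o', (c o * c o') * ((∫ ω, X o ω i ∂μ) * (∫ ω, X o' ω j ∂μ)) := by
      rw [Finset.sum_mul_sum]
      exact Finset.sum_congr rfl fun o _ =>
        Finset.sum_congr rfl fun o' _ => by ring
    have e6 : (∑ o, ∑ o', (c o * c o') * (∫ ω, X o ω i * X o' ω j ∂μ))
          - (∑ o, ∑ o', (c o * c o') * ((∫ ω, X o ω i ∂μ) * (∫ ω, X o' ω j ∂μ)))
        = ∑ o, ∑ o', (c o * c o') * ((∫ ω, X o ω i * X o' ω j ∂μ)
            - (∫ ω, X o ω i ∂μ) * (∫ ω, X o' ω j ∂μ)) := by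
      rw [← Finset.sum_sub_distrib]
      exact Finset.sum_congr rfl fun o _ => by
        rw [← Finset.sum_sub_distrib]
        exact Finset.sum_congr rfl fun o' _ => by ring
    have e7 : ∀ o, (∑ o', (c o * c o') * ((∫ ω, X o ω i * X o' ω j ∂μ)
            - (∫ ω, X o ω i ∂μ) * (∫ ω, X o' ω j ∂μ)))
        = c o * c o * covMatrix μ (X o) i j := by
      intro o
      rw [Finset.sum_eq_single o]
      · rfl
      · intro o' _ hne
        rw [hcross o o' (Ne.symm hne) i j]
        ring
      · intro habs; exact absurd (Finset.mem_univ o) habs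
    calc (∑ o, ∑ o', (c o * c o') * (∫ ω, X o ω i * X o' ω j ∂μ))
          + β0 * (∑ o, c o * (∫ ω, X o ω i ∂μ))
          + β0 * (∑ o, c o * (∫ ω, X o ω j ∂μ)) + β0 * β0
          - ((∑ o, c o * (∫ ω, X o ω i ∂μ)) + β0)
            * ((∑ o, c o * (∫ ω, X o ω j ∂μ)) + β0)
        = (∑ o, ∑ o', (c o * c o') * (∫ ω, X o ω i * X o' ω j ∂μ))
          - (∑ o, c o * (∫ ω, X o ω i ∂μ)) * (∑ o, c o * (∫ ω, X o ω j ∂μ)) := by ring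
      _ = ∑ o, c o * c o * covMatrix μ (X o) i j := by
          rw [e5, e6]
          exact Finset.sum_congr rfl fun o _ => e7 o
  rw [key, Fintype.sum_option]
  -- split off the ε term
  have hc0 : c none * c none * covMatrix μ (X none) i j
      = σe2 * (1 : Matrix (Fin n) (Fin n) ℝ) i j := by
    simp only [hcdef, hXdef, Option.elim, one_mul]
    rw [hεcov]
    simp [Matrix.smul_apply]
  -- the Z-part
  have hZpart : (∑ s, c (some s) * c (some s) * covMatrix μ (X (some s)) i j)
      = ∑ l, ((u l / nsite l) *
          ∑ s ∈ Finset.univ.filter (fun s => loc s = l ∧ s ∉ St), (β s) ^ 2)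
            * (h l - hij l i j) := by
    have step1 : (∑ s, c (some s) * c (some s) * covMatrix μ (X (some s)) i j)
        = ∑ s ∈ Finset.univ.filter (fun s => s ∉ St),
            (β s) ^ 2 * (u (loc s) / nsite (loc s) * (h (loc s) - hij (loc s) i j)) := by
      rw [← Finset.sum_filter_add_sum_filter_not Finset.univ (fun s => s ∉ St)]
      have hz : (∑ s ∈ Finset.univ.filter (fun s => ¬ s ∉ St),
          c (some s) * c (some s) * covMatrix μ (X (some s)) i j) = 0 := by
        apply Finset.sum_eq_zero
        intro s hs
        simp only [Finset.mem_filter, not_not] at hs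
        simp only [hXdef, Option.elim]
        rw [hdet s hs.2]
        simp
      rw [hz, add_zero]
      apply Finset.sum_congr rfl
      intro s hs
      simp only [Finset.mem_filter] at hs
      simp only [hcdef, hXdef, Option.elim]
      rw [hcov s hs.2 i j]
      ring
    rw [step1]
    have step2 : ∀ l, ((u l / nsite l) *
          ∑ s ∈ Finset.univ.filter (fun s => loc s = l ∧ s ∉ St), (β s) ^ 2)
            * (h l - hij l i j)
        = ∑ s ∈ (Finset.univ.filter (fun s => s ∉ St)).filter (fun s => loc s = l),
            (β s) ^ 2 * (u (loc s) / nsite (loc s) * (h (loc s) - hij (loc s) i j)) := by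
      intro l
      rw [Finset.filter_filter]
      rw [show Finset.univ.filter (fun s => s ∉ St ∧ loc s = l)
          = Finset.univ.filter (fun s => loc s = l ∧ s ∉ St) by
        ext s; simp [and_comm]]
      rw [Finset.mul_sum, Finset.sum_mul]
      apply Finset.sum_congr rfl
      intro s hs
      simp only [Finset.mem_filter] at hs
      rw [hs.2.1]
      ring
    rw [Finset.sum_congr rfl fun l _ => step2 l]
    exact (Finset.sum_fiberwise_of_maps_to (fun s _ => Finset.mem_univ (loc s)) _).symm
  rw [hc0, hZpart]
  simp only [Matrix.add_apply, Matrix.sum_apply, Matrix.smul_apply, Matrix.of_apply,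
    smul_eq_mul]
  ring
end

section
/- In the model of Theorems 1 and 2, at t = −t_MRCA (so S(t) = ∅ and all h_{t}^l, h_{t,ij}^l reduce appropriately), the fixed-effect genetic term vanishes: E_t[y] = (β^0 + Σ_l (u^l h_t^l/n^l) Σ_{s∈l} β^s)·𝟏, a constant vector, while Var_t(y) = Σ_l (σ_t^l)² A_t^l + σ_e² I with (σ_t^l)² = (u^l/n^l)Σ_{s∈l}(β^s)²: all genetic effects are random effects at the grand TMRCA. -/
open MeasureTheory ProbabilityTheory

/-- Covariance of sums of pairwise-uncorrelated families. -/
lemma cov_sum_uncorrelated {Ω : Type*} [MeasurableSpace Ω] (μ : Measure Ω)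
    [IsProbabilityMeasure μ] {ι : Type*} [Fintype ι] [DecidableEq ι] (F G : ι → Ω → ℝ)
    (hFi : ∀ k, Integrable (F k) μ) (hGi : ∀ k, Integrable (G k) μ)
    (hFG : ∀ k k', Integrable (fun ω => F k ω * G k' ω) μ)
    (huncorr : ∀ k k', k ≠ k' →
      ∫ ω, F k ω * G k' ω ∂μ = (∫ ω, F k ω ∂μ) * (∫ ω, G k' ω ∂μ)) :
    (∫ ω, (∑ k, F k ω) * (∑ k, G k ω) ∂μ)
        - (∫ ω, ∑ k, F k ω ∂μ) * (∫ ω, ∑ k, G k ω ∂μ)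
      = ∑ k, ((∫ ω, F k ω * G k ω ∂μ) - (∫ ω, F k ω ∂μ) * (∫ ω, G k ω ∂μ)) := by
  have h1 : (∫ ω, (∑ k, F k ω) * (∑ k, G k ω) ∂μ)
      = ∑ k, ∑ k', ∫ ω, F k ω * G k' ω ∂μ := by
    have : (fun ω => (∑ k, F k ω) * (∑ k, G k ω))
        = fun ω => ∑ k, ∑ k', F k ω * G k' ω := by
      funext ω; rw [Finset.sum_mul_sum]
    rw [this, integral_finset_sum _ (fun k _ => integrable_finset_sum _ (fun k' _ => hFG k k'))]
    exact Finset.sum_congr rfl fun k _ => integral_finset_sum _ (fun k' _ => hFG k k')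
  rw [h1, integral_finset_sum _ (fun k _ => hFi k), integral_finset_sum _ (fun k _ => hGi k),
    Finset.sum_mul_sum, ← Finset.sum_sub_distrib]
  refine Finset.sum_congr rfl fun k _ => ?_
  rw [← Finset.sum_sub_distrib]
  rw [Finset.sum_eq_single k]
  · intro k' _ hk'
    rw [huncorr k k' (Ne.symm hk'), sub_self]
  · intro h; exact absurd (Finset.mem_univ k) h

/-- Covariance is unchanged by adding constants. -/
lemma cov_add_const {Ω : Type*} [MeasurableSpace Ω] (μ : Measure Ω)
    [IsProbabilityMeasure μ] (f g : Ω → ℝ) (c : ℝ)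
    (hf : Integrable f μ) (hg : Integrable g μ)
    (hfg : Integrable (fun ω => f ω * g ω) μ) :
    (∫ ω, (f ω + c) * (g ω + c) ∂μ) - (∫ ω, f ω + c ∂μ) * (∫ ω, g ω + c ∂μ)
      = (∫ ω, f ω * g ω ∂μ) - (∫ ω, f ω ∂μ) * (∫ ω, g ω ∂μ) := by
  have hexp : (fun ω => (f ω + c) * (g ω + c))
      = fun ω => f ω * g ω + (c * g ω + (c * f ω + c * c)) := by
    funext ω; ring
  have I1 : Integrable (fun ω => c * f ω + c * c) μ :=
    (hf.const_mul c).add (integrable_const _)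
  have I2 : Integrable (fun ω => c * g ω + (c * f ω + c * c)) μ := (hg.const_mul c).add I1
  rw [hexp, integral_add hfg I2, integral_add (hg.const_mul c) I1,
    integral_add (hf.const_mul c) (integrable_const _),
    integral_add hf (integrable_const _), integral_add hg (integrable_const _),
    integral_const_mul, integral_const_mul, integral_const]
  simp [measure_univ]
  ring

/-- At the grand TMRCA (`S(t) = ∅`, no site yet polymorphic), all genetic effects are random
effects: `E_t[y] = (β⁰ + Σ_l (u^l h_t^l/n^l) Σ_{s∈l} β^s)·𝟏` is a constant vector, while
`Var_t(y) = Σ_l (σ_t^l)² A_t^l + σ_e² I` with `(σ_t^l)² = (u^l/n^l) Σ_{s∈l} (β^s)²`. -/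
theorem all_random_effects_at_tmrca {Ω : Type*} [MeasurableSpace Ω] (μ : Measure Ω)
    [IsProbabilityMeasure μ] {n nl : ℕ} {S : Type*} [Fintype S] [DecidableEq S]
    (loc : S → Fin nl) (Z : S → Ω → Fin n → ℝ) (ε : Ω → Fin n → ℝ) (β : S → ℝ) (β0 : ℝ)
    (u nsite h : Fin nl → ℝ) (hij : Fin nl → Fin n → Fin n → ℝ) (σe2 : ℝ)
    (hindep : iIndepFun
      (fun o : Option S => Option.elim o ε Z) μ)
    (hZL2 : ∀ s i, MemLp (fun ω => Z s ω i) 2 μ)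
    (hεL2 : ∀ i, MemLp (fun ω => ε ω i) 2 μ)
    (hZmeas : ∀ s, Measurable (Z s)) (hεmeas : Measurable ε)
    (hε0 : ∀ i, ∫ ω, ε ω i ∂μ = 0)
    (hεcov : covMatrix μ ε = σe2 • (1 : Matrix (Fin n) (Fin n) ℝ))
    (hmean : ∀ s i, ∫ ω, Z s ω i ∂μ = u (loc s) * h (loc s) / nsite (loc s))
    (hcov : ∀ s i j,
      covMatrix μ (Z s) i j = u (loc s) / nsite (loc s) * (h (loc s) - hij (loc s) i j)) :
    (∀ i, ∫ ω, ((∑ s, Z s ω i * β s) + β0 + ε ω i) ∂μ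
        = β0 + ∑ l, (u l * h l / nsite l) *
            ∑ s ∈ Finset.univ.filter (fun s => loc s = l), β s) ∧
      covMatrix μ (fun ω i => (∑ s, Z s ω i * β s) + β0 + ε ω i)
        = (∑ l, ((u l / nsite l) *
              ∑ s ∈ Finset.univ.filter (fun s => loc s = l), (β s) ^ 2) •
            Matrix.of (fun i j => h l - hij l i j))
          + σe2 • (1 : Matrix (Fin n) (Fin n) ℝ) := by
  -- coordinate random variables indexed by `Option S`
  set F : Option S → Fin n → Ω → ℝ :=
    fun o i ω => o.elim (ε ω i) (fun s => Z s ω i * β s) with hF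
  have hFL2 : ∀ o i, MemLp (F o i) 2 μ := by
    rintro (_ | s) i
    · exact hεL2 i
    · have h' : F (some s) i = fun ω => β s * Z s ω i := by
        funext ω; simp [hF, Option.elim, mul_comm]
      rw [h']; exact (hZL2 s i).const_mul (β s)
  have hFint : ∀ o i, Integrable (F o i) μ := fun o i => (hFL2 o i).integrable one_le_two
  have hFGint : ∀ o o' i j, Integrable (fun ω => F o i ω * F o' j ω) μ := by
    intro o o' i j
    have : MemLp (F o' j • F o i) 1 μ :=
      by
        haveI : ENNReal.HolderTriple 2 2 1 := ⟨by norm_num [ENNReal.inv_two_add_inv_two]⟩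
        exact (hFL2 o i).smul (hFL2 o' j)
    have h2 : Integrable (F o' j • F o i) μ := memLp_one_iff_integrable.mp this
    have : (F o' j • F o i) = fun ω => F o i ω * F o' j ω := by
      funext ω; simp [mul_comm]
    rwa [this] at h2
  have hFind : ∀ o o', o ≠ o' → ∀ i j, IndepFun (F o i) (F o' j) μ := by
    intro o o' hoo' i j
    have hW := hindep.indepFun hoo'
    rcases o with _ | s <;> rcases o' with _ | s'
    · exact absurd rfl hoo'
    · exact hW.comp (measurable_pi_apply i) ((measurable_pi_apply j).mul_const (β s'))
    · exact hW.comp ((measurable_pi_apply i).mul_const (β s)) (measurable_pi_apply j)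
    · exact hW.comp ((measurable_pi_apply i).mul_const (β s))
        ((measurable_pi_apply j).mul_const (β s'))
  have huncorr : ∀ (i j : Fin n) (o o' : Option S), o ≠ o' →
      ∫ ω, F o i ω * F o' j ω ∂μ = (∫ ω, F o i ω ∂μ) * (∫ ω, F o' j ω ∂μ) := by
    intro i j o o' hoo'
    exact (hFind o o' hoo' i j).integral_mul_eq_mul_integral (hFL2 o i).1 (hFL2 o' j).1
  -- rewrite y in terms of F
  have hy : ∀ i ω, (∑ s, Z s ω i * β s) + β0 + ε ω i = (∑ o, F o i ω) + β0 := by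
    intro i ω
    rw [Fintype.sum_option]
    simp only [hF, Option.elim]
    ring
  have hsumint : ∀ i, Integrable (fun ω => ∑ o, F o i ω) μ :=
    fun i => integrable_finset_sum _ (fun o _ => hFint o i)
  -- mean of each F
  have hFmean : ∀ i, ∫ ω, ∑ o, F o i ω ∂μ
      = ∑ s, u (loc s) * h (loc s) / nsite (loc s) * β s := by
    intro i
    rw [integral_finset_sum _ (fun o _ => hFint o i), Fintype.sum_option]
    have h0 : ∫ ω, F none i ω ∂μ = 0 := hε0 i
    rw [h0, zero_add]
    refine Finset.sum_congr rfl fun s _ => ?_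
    have : ∫ ω, F (some s) i ω ∂μ = (∫ ω, Z s ω i ∂μ) * β s := integral_mul_const _ _
    rw [this, hmean]
  constructor
  · -- mean part
    intro i
    have : (fun ω => (∑ s, Z s ω i * β s) + β0 + ε ω i)
        = fun ω => (∑ o, F o i ω) + β0 := by funext ω; exact hy i ω
    rw [this, integral_add (hsumint i) (integrable_const _), integral_const]
    simp only [measure_univ, ENNReal.toReal_one, probReal_univ, smul_eq_mul, one_mul]
    rw [hFmean i, ← Finset.sum_fiberwise (Finset.univ) loc
      (fun s => u (loc s) * h (loc s) / nsite (loc s) * β s)]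
    rw [add_comm]
    congr 1
    refine Finset.sum_congr rfl fun l _ => ?_
    rw [Finset.mul_sum]
    refine Finset.sum_congr rfl fun s hs => ?_
    rw [(Finset.mem_filter.mp hs).2]
  · -- covariance part
    ext i j
    show (∫ ω, ((∑ s, Z s ω i * β s) + β0 + ε ω i) * ((∑ s, Z s ω j * β s) + β0 + ε ω j) ∂μ)
        - (∫ ω, (∑ s, Z s ω i * β s) + β0 + ε ω i ∂μ)
          * (∫ ω, (∑ s, Z s ω j * β s) + β0 + ε ω j ∂μ) = _
    simp only [hy]
    rw [cov_add_const μ _ _ β0 (hsumint i) (hsumint j)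
      (by
        have : (fun ω => (∑ o, F o i ω) * (∑ o, F o j ω))
            = fun ω => ∑ o, ∑ o', F o i ω * F o' j ω := by
          funext ω; rw [Finset.sum_mul_sum]
        rw [this]
        exact integrable_finset_sum _ fun o _ =>
          integrable_finset_sum _ fun o' _ => hFGint o o' i j)]
    rw [cov_sum_uncorrelated μ (fun o => F o i) (fun o => F o j)
      (fun o => hFint o i) (fun o => hFint o j) (fun o o' => hFGint o o' i j)
      (fun o o' hoo' => huncorr i j o o' hoo')]
    rw [Fintype.sum_option]
    have hnone : (∫ ω, F none i ω * F none j ω ∂μ)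
        - (∫ ω, F none i ω ∂μ) * (∫ ω, F none j ω ∂μ)
        = σe2 * (1 : Matrix (Fin n) (Fin n) ℝ) i j := by
      have := congrFun (congrFun (congrArg (fun M => (M : Matrix (Fin n) (Fin n) ℝ)) hεcov) i) j
      simpa [hF, covMatrix, Matrix.smul_apply, smul_eq_mul] using this
    have hsome : ∀ s : S, (∫ ω, F (some s) i ω * F (some s) j ω ∂μ)
        - (∫ ω, F (some s) i ω ∂μ) * (∫ ω, F (some s) j ω ∂μ)
        = β s ^ 2 * (u (loc s) / nsite (loc s) * (h (loc s) - hij (loc s) i j)) := by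
      intro s
      have h1 : (fun ω => F (some s) i ω * F (some s) j ω)
          = fun ω => (Z s ω i * Z s ω j) * (β s * β s) := by
        funext ω; simp only [hF, Option.elim]; ring
      have h2 : ∫ ω, F (some s) i ω ∂μ = (∫ ω, Z s ω i ∂μ) * β s := integral_mul_const _ _
      have h3 : ∫ ω, F (some s) j ω ∂μ = (∫ ω, Z s ω j ∂μ) * β s := integral_mul_const _ _
      rw [h1, integral_mul_const, h2, h3]
      have hc := hcov s i j
      simp only [covMatrix, Matrix.of_apply] at hc
      have : (∫ ω, Z s ω i * Z s ω j ∂μ) * (β s * β s)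
          - (∫ ω, Z s ω i ∂μ) * β s * ((∫ ω, Z s ω j ∂μ) * β s)
          = ((∫ ω, Z s ω i * Z s ω j ∂μ)
            - (∫ ω, Z s ω i ∂μ) * (∫ ω, Z s ω j ∂μ)) * β s ^ 2 := by ring
      rw [this, hc]; ring
    rw [hnone]
    simp only [hsome]
    -- now regroup the sum over s by locus
    rw [← Finset.sum_fiberwise (Finset.univ) loc
      (fun s => β s ^ 2 * (u (loc s) / nsite (loc s) * (h (loc s) - hij (loc s) i j)))]
    have hRHS : ((∑ l, ((u l / nsite l) *
          ∑ s ∈ Finset.univ.filter (fun s => loc s = l), (β s) ^ 2) •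
        Matrix.of (fun i j => h l - hij l i j))
        + σe2 • (1 : Matrix (Fin n) (Fin n) ℝ)) i j
        = (∑ l, ((u l / nsite l) *
            ∑ s ∈ Finset.univ.filter (fun s => loc s = l), (β s) ^ 2) * (h l - hij l i j))
          + σe2 * (1 : Matrix (Fin n) (Fin n) ℝ) i j := by
      simp [Matrix.add_apply, Matrix.sum_apply, Matrix.smul_apply, smul_eq_mul]
    rw [hRHS, add_comm]
    congr 1
    refine Finset.sum_congr rfl fun l _ => ?_
    rw [Finset.mul_sum, Finset.sum_mul]
    refine Finset.sum_congr rfl fun s hs => ?_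
    rw [(Finset.mem_filter.mp hs).2]
    ring
end
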